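/- Every Markov chain with a strictly positive equilibrium P* is a finite conic combination (combination with nonnegative coefficients) of simple cycles with the same equilibrium P*: if (q_{ij}) ≥ 0 satisfies the balance condition with equilibrium P*, then there exist finitely many simple cycles C_1, …, C_m with rates of the form κ_s / p*_{i_j} along cycle C_s such that q_{ij} = ∑_s (rate of cycle C_s for transition A_j → A_i). -/

import Mathlib

open Finset

lemma exists_cycle (n : ℕ) (f : Fin n → Fin n → ℝ)
    (hnn : ∀ i j, 0 ≤ f i j) (hdiag : ∀ i, f i i = 0)
    (hcirc : ∀ i, ∑ j, f i j = ∑ j, f j i)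
    (a b : Fin n) (hab : 0 < f a b) :
    ∃ (k : ℕ) (c : Fin (k+2) → Fin n), Function.Injective c ∧
      ∀ t, 0 < f (c (t+1)) (c t) := by
  classical
  have key : ∀ v : Fin n, 0 < ∑ j, f j v → ∃ u, 0 < f u v := by
    intro v hv
    by_contra h
    push_neg at h
    have : ∑ j, f j v ≤ 0 := Finset.sum_nonpos (fun j _ => h j)
    linarith
  -- the subtype of vertices with positive outflow
  let S := {v : Fin n // 0 < ∑ j, f j v}
  have outflow_pos : ∀ (v : Fin n) (u : Fin n), 0 < f u v → 0 < ∑ j, f j u := by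
    intro v u hu
    rw [← hcirc u]
    calc (0:ℝ) < f u v := hu
    _ ≤ ∑ j, f u j := Finset.single_le_sum (fun j _ => hnn u j) (mem_univ v)
  let next : S → S := fun v =>
    ⟨(key v.1 v.2).choose, outflow_pos v.1 _ (key v.1 v.2).choose_spec⟩
  have hb : 0 < ∑ j, f j b := by
    calc (0:ℝ) < f a b := hab
    _ ≤ ∑ j, f j b := Finset.single_le_sum (fun j _ => hnn j b) (mem_univ a)
  let X : ℕ → S := fun m => next^[m] ⟨b, hb⟩
  let x : ℕ → Fin n := fun m => (X m).1
  have hstep : ∀ m, 0 < f (x (m+1)) (x m) := by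
    intro m
    have h1 : X (m+1) = next (X m) := Function.iterate_succ_apply' next m _
    have : x (m+1) = (key (x m) (X m).2).choose := by
      simp only [x, h1, next]
    rw [this]
    exact (key (x m) (X m).2).choose_spec
  -- pigeonhole
  have hn : 0 < n := Fin.pos b
  have hninj : ¬ Function.Injective (fun i : Fin (n+1) => x i.1) := by
    intro hinj
    have := Fintype.card_le_of_injective _ hinj
    simp at this
  rw [Function.not_injective_iff] at hninj
  obtain ⟨i, j, hxij, hij⟩ := hninj
  have hP : ∃ m : ℕ, ∃ i', i' < m ∧ x i' = x m := by
    rcases lt_or_gt_of_ne (fun h => hij (Fin.ext h) : i.1 ≠ j.1) with h | h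
    · exact ⟨j.1, i.1, h, hxij⟩
    · exact ⟨i.1, j.1, h, hxij.symm⟩
  let J := Nat.find hP
  obtain ⟨I, hIJ, hxIJ⟩ : ∃ i', i' < J ∧ x i' = x J := Nat.find_spec hP
  have hI2 : I + 2 ≤ J := by
    by_contra h
    push_neg at h
    have hJ : J = I + 1 := by omega
    have h0 := hstep I
    rw [← hJ, ← hxIJ, hdiag] at h0
    exact lt_irrefl _ h0
  -- build the cycle
  set k := J - I - 2 with hk
  have hL : k + 2 = J - I := by omega
  let c : Fin (k+2) → Fin n := fun t => x (I + t.1)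
  refine ⟨k, c, ?_, ?_⟩
  · intro t t' het
    by_contra hne
    have hvne : t.1 ≠ t'.1 := fun h => hne (Fin.ext h)
    rcases lt_or_gt_of_ne hvne with h | h
    · exact Nat.find_min hP (m := I + t'.1) (by omega) ⟨I + t.1, by omega, het⟩
    · exact Nat.find_min hP (m := I + t.1) (by omega) ⟨I + t'.1, by omega, het.symm⟩
  · intro t
    by_cases ht : t = Fin.last (k+1)
    · have h1 : (t+1).1 = 0 := by rw [Fin.val_add_one, if_pos ht]
      have h2 : c (t+1) = x J := by
        show x (I + (t+1).1) = x J
        rw [h1]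
        simpa using hxIJ
      have h3 : c t = x (J - 1) := by
        show x (I + t.1) = x (J-1)
        congr 1
        rw [ht]
        show I + (k+1) = J - 1
        omega
      rw [h2, h3]
      have := hstep (J-1)
      have hJ1 : J - 1 + 1 = J := by omega
      rwa [hJ1] at this
    · have h1 : (t+1).1 = t.1 + 1 := by rw [Fin.val_add_one, if_neg ht]
      have h2 : c (t+1) = x (I + t.1 + 1) := by
        show x (I + (t+1).1) = _
        rw [h1, ← Nat.add_assoc]
      rw [h2]
      exact hstep (I + t.1)

lemma circ_decomp (n : ℕ) : ∀ (N : ℕ) (f : Fin n → Fin n → ℝ),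
    (Finset.univ.filter (fun p : Fin n × Fin n => f p.1 p.2 ≠ 0)).card ≤ N →
    (∀ i j, 0 ≤ f i j) → (∀ i, f i i = 0) →
    (∀ i, ∑ j, f i j = ∑ j, f j i) →
    ∃ (m : ℕ) (ks : Fin m → ℕ) (fs : (s : Fin m) → Fin (ks s + 2) → Fin n)
      (κ : Fin m → ℝ),
      (∀ s, 0 ≤ κ s) ∧ (∀ s, Function.Injective (fs s)) ∧
      ∀ i j, f i j = ∑ s, ∑ t : Fin (ks s + 2),
        if fs s (t+1) = i ∧ fs s t = j then κ s else 0 := by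
  classical
  intro N
  induction N with
  | zero =>
    intro f hcard hnn hdiag hcirc
    have hzero : ∀ i j, f i j = 0 := by
      intro i j
      by_contra h
      have : (i, j) ∈ Finset.univ.filter (fun p : Fin n × Fin n => f p.1 p.2 ≠ 0) := by
        simp [h]
      have := Finset.card_pos.mpr ⟨_, this⟩
      omega
    exact ⟨0, Fin.elim0, fun s => Fin.elim0 s, Fin.elim0, fun s => Fin.elim0 s,
      fun s => Fin.elim0 s, fun i j => by simp [hzero]⟩
  | succ N ih =>
    intro f hcard hnn hdiag hcirc
    by_cases hz : ∀ i j, f i j = 0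
    · exact ⟨0, Fin.elim0, fun s => Fin.elim0 s, Fin.elim0, fun s => Fin.elim0 s,
        fun s => Fin.elim0 s, fun i j => by simp [hz]⟩
    push_neg at hz
    obtain ⟨a, b, hab⟩ := hz
    have hab' : 0 < f a b := lt_of_le_of_ne (hnn a b) (Ne.symm hab)
    obtain ⟨k, c, hcinj, hcpos⟩ := exists_cycle n f hnn hdiag hcirc a b hab'
    -- minimal edge value along the cycle
    obtain ⟨t0, -, ht0min⟩ := Finset.exists_min_image Finset.univ
      (fun t : Fin (k+2) => f (c (t+1)) (c t)) ⟨0, mem_univ 0⟩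
    set κ0 : ℝ := f (c (t0+1)) (c t0) with hκ0
    have hκ0pos : 0 < κ0 := hcpos t0
    have hκ0le : ∀ t, κ0 ≤ f (c (t+1)) (c t) := fun t => ht0min t (mem_univ t)
    -- the cycle indicator flow
    set g : Fin n → Fin n → ℝ := fun i j =>
      ∑ t : Fin (k+2), if c (t+1) = i ∧ c t = j then κ0 else 0 with hg
    have hadd1_inj : Function.Injective (fun t : Fin (k+2) => t + 1) :=
      fun t t' h => by simpa using (add_left_injective 1 h)
    -- g at a cycle edge equals κ0
    have hg_edge : ∀ t : Fin (k+2), g (c (t+1)) (c t) = κ0 := by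
      intro t
      rw [hg]
      have : ∀ t' : Fin (k+2),
          (if c (t'+1) = c (t+1) ∧ c t' = c t then κ0 else 0)
          = if t' = t then κ0 else 0 := by
        intro t'
        congr 1
        simp only [eq_iff_iff]
        constructor
        · rintro ⟨-, h2⟩; exact hcinj h2
        · rintro rfl; exact ⟨rfl, rfl⟩
      simp only [this]
      simp
    -- g is zero unless (i,j) is a cycle edge
    have hg_zero : ∀ i j, (∀ t : Fin (k+2), ¬(c (t+1) = i ∧ c t = j)) → g i j = 0 := by
      intro i j h
      rw [hg]
      exact Finset.sum_eq_zero (fun t _ => if_neg (h t))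
    have hg_nonneg : ∀ i j, 0 ≤ g i j := by
      intro i j
      exact Finset.sum_nonneg (fun t _ => by positivity)
    have hg_le : ∀ i j, g i j ≤ f i j := by
      intro i j
      by_cases h : ∃ t : Fin (k+2), c (t+1) = i ∧ c t = j
      · obtain ⟨t, h1, h2⟩ := h
        rw [← h1, ← h2, hg_edge t]
        exact hκ0le t
      · push_neg at h
        rw [hg_zero i j (fun t ht => (h t ht.1 ht.2))]
        exact hnn i j
    have hg_diag : ∀ i, g i i = 0 := by
      intro i
      apply hg_zero
      rintro t ⟨h1, h2⟩
      have heq : t + 1 = t := hcinj (h1.trans h2.symm)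
      have h3 := congrArg Fin.val heq
      rw [Fin.val_add_one] at h3
      split_ifs at h3 with h4
      · rw [h4] at h3; simp [Fin.val_last] at h3
      · omega
    have hg_circ : ∀ i, ∑ j, g i j = ∑ j, g j i := by
      intro i
      have h1 : ∑ j, g i j = ∑ t : Fin (k+2), if c (t+1) = i then κ0 else 0 := by
        rw [hg]
        rw [Finset.sum_comm]
        congr 1
        ext t
        by_cases h : c (t+1) = i
        · simp only [h, true_and]
          rw [Finset.sum_ite_eq Finset.univ (c t) (fun _ => κ0)]
          simp [h]
        · simp [h]
      have h2 : ∑ j, g j i = ∑ t : Fin (k+2), if c t = i then κ0 else 0 := by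
        rw [hg]
        rw [Finset.sum_comm]
        congr 1
        ext t
        by_cases h : c t = i
        · simp only [h, and_true]
          rw [Finset.sum_ite_eq Finset.univ (c (t+1)) (fun _ => κ0)]
          simp
        · simp [h]
      rw [h1, h2]
      exact Fintype.sum_equiv (Equiv.addRight (1 : Fin (k+2))) _ _ (fun t => rfl)
    -- subtract the cycle
    set f' : Fin n → Fin n → ℝ := fun i j => f i j - g i j with hf'
    have hf'nn : ∀ i j, 0 ≤ f' i j := fun i j => by
      simp only [hf']; linarith [hg_le i j]
    have hf'diag : ∀ i, f' i i = 0 := fun i => by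
      simp [hf', hdiag i, hg_diag i]
    have hf'circ : ∀ i, ∑ j, f' i j = ∑ j, f' j i := by
      intro i
      simp only [hf', Finset.sum_sub_distrib]
      rw [hcirc i, hg_circ i]
    -- support strictly decreases
    have hsub : (Finset.univ.filter (fun p : Fin n × Fin n => f' p.1 p.2 ≠ 0)) ⊂
        (Finset.univ.filter (fun p : Fin n × Fin n => f p.1 p.2 ≠ 0)) := by
      constructor
      · intro p hp
        simp only [mem_filter, mem_univ, true_and] at hp ⊢
        intro h0
        apply hp
        have h1 : g p.1 p.2 ≤ 0 := by rw [← h0]; exact hg_le _ _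
        have h2 : g p.1 p.2 = 0 := le_antisymm h1 (hg_nonneg _ _)
        simp [hf', h0, h2]
      · intro hss
        have hmem : (c (t0+1), c t0) ∈
            (Finset.univ.filter (fun p : Fin n × Fin n => f p.1 p.2 ≠ 0)) := by
          simp only [mem_filter, mem_univ, true_and]
          exact ne_of_gt (hcpos t0)
        have := hss hmem
        simp only [mem_filter, mem_univ, true_and] at this
        apply this
        simp [hf', hg_edge t0, hκ0]
    have hcard' : (Finset.univ.filter (fun p : Fin n × Fin n => f' p.1 p.2 ≠ 0)).card ≤ N := by
      have := Finset.card_lt_card hsub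
      omega
    obtain ⟨m, ks, fs, κ, hκnn, hfsinj, hdec⟩ := ih f' hcard' hf'nn hf'diag hf'circ
    refine ⟨m+1, Fin.cons k ks, Fin.cons c fs, Fin.cons κ0 κ, ?_, ?_, ?_⟩
    · intro s
      refine Fin.cases ?_ ?_ s
      · simpa using le_of_lt hκ0pos
      · intro s'; simpa using hκnn s'
    · intro s
      refine Fin.cases ?_ ?_ s
      · exact hcinj
      · intro s'; exact hfsinj s'
    · intro i j
      rw [Fin.sum_univ_succ]
      have : f i j = g i j + f' i j := by simp [hf']
      rw [this, hdec i j, hg]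
      rfl

/-- Every Markov chain with a strictly positive equilibrium `P*` is a finite
conic combination of simple cycles with the same equilibrium `P*`. -/
theorem markov_chain_decomposition_into_cycles (n : ℕ) (q : Fin n → Fin n → ℝ)
    (pstar : Fin n → ℝ) (hpos : ∀ i, 0 < pstar i)
    (hq : ∀ i j, i ≠ j → 0 ≤ q i j)
    (hbal : ∀ i, ∑ j ∈ Finset.univ.filter (· ≠ i), q i j * pstar j =
      (∑ j ∈ Finset.univ.filter (· ≠ i), q j i) * pstar i) :
    ∃ (m : ℕ) (ks : Fin m → ℕ) (fs : (s : Fin m) → Fin (ks s + 2) → Fin n)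
      (κ : Fin m → ℝ),
      (∀ s, 0 ≤ κ s) ∧ (∀ s, Function.Injective (fs s)) ∧
      ∀ i j, i ≠ j → q i j =
        ∑ s, ∑ t : Fin (ks s + 2),
          if fs s (t + 1) = i ∧ fs s t = j then κ s / pstar j else 0 := by
  classical
  set F : Fin n → Fin n → ℝ := fun i j => if i = j then 0 else q i j * pstar j with hF
  have hFnn : ∀ i j, 0 ≤ F i j := by
    intro i j
    simp only [hF]
    split_ifs with h
    · exact le_refl 0
    · exact mul_nonneg (hq i j h) (le_of_lt (hpos j))
  have hFdiag : ∀ i, F i i = 0 := fun i => by simp [hF]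
  have hrow : ∀ i, ∑ j, F i j = ∑ j ∈ Finset.univ.filter (· ≠ i), q i j * pstar j := by
    intro i
    rw [Finset.sum_filter]
    apply Finset.sum_congr rfl
    intro j _
    simp only [hF]
    by_cases h : i = j
    · simp [h]
    · simp [h, Ne.symm h]
  have hcol : ∀ i, ∑ j, F j i = ∑ j ∈ Finset.univ.filter (· ≠ i), q j i * pstar i := by
    intro i
    rw [Finset.sum_filter]
    apply Finset.sum_congr rfl
    intro j _
    simp only [hF]
    by_cases h : j = i
    · simp [h]
    · simp [h]
  have hFcirc : ∀ i, ∑ j, F i j = ∑ j, F j i := by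
    intro i
    rw [hrow i, hcol i, hbal i, Finset.sum_mul]
  obtain ⟨m, ks, fs, κ, h1, h2, h3⟩ := circ_decomp n
    (Finset.univ.filter (fun p : Fin n × Fin n => F p.1 p.2 ≠ 0)).card F
    (le_refl _) hFnn hFdiag hFcirc
  refine ⟨m, ks, fs, κ, h1, h2, ?_⟩
  intro i j hij
  have hpj : pstar j ≠ 0 := ne_of_gt (hpos j)
  have hFij : F i j = q i j * pstar j := if_neg hij
  have : q i j = F i j / pstar j := by
    rw [hFij, mul_div_cancel_right₀ _ hpj]
  rw [this, h3 i j, Finset.sum_div]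
  apply Finset.sum_congr rfl
  intro s _
  rw [Finset.sum_div]
  apply Finset.sum_congr rfl
  intro t _
  split_ifs
  · rfl
  · exact zero_div _
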